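/- arXiv:2310.17424 — 3 statements merged into one kernel-verified Lean document; each statement's English description precedes it below -/
import Mathlib

section
/- For every t ≥ 0 and x ∈ ℝ², ∫_{ℝ²} 1/(|y|(e^t+|x−y|)²) dy ≤ C·e^{−t}, where C is a uniform constant independent of t and x. -/
open Real MeasureTheory

noncomputable section

abbrev E2 := EuclideanSpace ℝ (Fin 2)

open Set Metric in
open scoped ENNReal in
lemma lint_norm_E2 (f : ℝ → ℝ≥0∞) (hf : Measurable f) :
    ∫⁻ (y : E2), f ‖y‖ =
      (volume : Measure E2).toSphere Set.univ *
        ∫⁻ r in Set.Ioi (0 : ℝ), ENNReal.ofReal r * f r := by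
  have h0 : MeasurableSet ({0}ᶜ : Set E2) := (measurableSet_singleton 0).compl
  have hd : Module.finrank ℝ E2 - 1 = 1 := by
    simp [finrank_euclideanSpace_fin]
  have key := (volume : Measure E2).measurePreserving_homeomorphUnitSphereProd
  rw [hd] at key
  calc
    ∫⁻ (y : E2), f ‖y‖ = ∫⁻ (y : E2) in ({0}ᶜ : Set E2), f ‖y‖ := by
      rw [restrict_compl_singleton]
    _ = ∫⁻ (y : ({0}ᶜ : Set E2)), f ‖y.1‖ ∂((volume : Measure E2).comap Subtype.val) :=
      (lintegral_subtype_comap h0 _).symm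
    _ = ∫⁻ (p : sphere (0 : E2) 1 × Set.Ioi (0 : ℝ)), f p.2
          ∂(((volume : Measure E2).toSphere).prod (Measure.volumeIoiPow 1)) := by
      rw [← key.lintegral_comp_emb (Homeomorph.measurableEmbedding _) (fun p => f p.2.1)]
      exact lintegral_congr fun y => by simp
    _ = ((volume : Measure E2).toSphere Set.univ) *
          ∫⁻ (r : Set.Ioi (0 : ℝ)), f r ∂(Measure.volumeIoiPow 1) := by
      rw [lintegral_prod]
      · simp [lintegral_const, mul_comm]
      · exact ((hf.comp measurable_subtype_coe).comp measurable_snd).aemeasurable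
    _ = _ := by
      congr 1
      rw [Measure.volumeIoiPow, lintegral_withDensity_eq_lintegral_mul _
          ((measurable_subtype_coe.pow_const 1).ennreal_ofReal)
          (show Measurable fun r : Set.Ioi (0:ℝ) => f r.1 from hf.comp measurable_subtype_coe)]
      simp only [Pi.mul_apply]
      rw [lintegral_subtype_comap measurableSet_Ioi
        (fun r => ENNReal.ofReal (r ^ 1) * f r)]
      simp

lemma ptw_bound {a u v : ℝ} (ha : 0 < a) (hu : 0 < u) (hv : 0 < v) :
    1 / (u * (a + v) ^ 2) ≤
      (if u ≤ a then 1 / (a ^ 2 * u) else 4 / u ^ 3) +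
        (if v ≤ a then 1 / (a ^ 2 * v) else 4 / v ^ 3) := by
  have hKu0 : (0:ℝ) ≤ if u ≤ a then 1 / (a ^ 2 * u) else 4 / u ^ 3 := by
    split_ifs <;> positivity
  have hKv0 : (0:ℝ) ≤ if v ≤ a then 1 / (a ^ 2 * v) else 4 / v ^ 3 := by
    split_ifs <;> positivity
  by_cases h1 : u ≤ a
  · refine le_trans ?_ (le_add_of_nonneg_right hKv0)
    rw [if_pos h1]
    apply one_div_le_one_div_of_le (by positivity)
    nlinarith [mul_pos (mul_pos hu ha) hv, mul_pos hu (mul_pos hv hv)]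
  · push_neg at h1
    by_cases h2 : u ≤ 2 * v
    · refine le_trans ?_ (le_add_of_nonneg_right hKv0)
      rw [if_neg (not_le.2 h1)]
      rw [div_le_div_iff₀ (by positivity) (by positivity)]
      have h4 : u ^ 2 ≤ 4 * (a + v) ^ 2 := by nlinarith
      nlinarith [mul_le_mul_of_nonneg_left h4 hu.le]
    · push_neg at h2
      refine le_trans ?_ (le_add_of_nonneg_left hKu0)
      by_cases h3 : v ≤ a
      · rw [if_pos h3]
        apply one_div_le_one_div_of_le (by positivity)
        have hvu : v ≤ u := by nlinarith
        have h5 : a ^ 2 ≤ (a + v) ^ 2 := by nlinarith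
        nlinarith [mul_le_mul_of_nonneg_right h5 hv.le,
          mul_le_mul_of_nonneg_left hvu (sq_nonneg (a + v))]
      · rw [if_neg h3]
        push_neg at h3
        rw [div_le_div_iff₀ (by positivity) (by positivity)]
        have hvu : v ≤ u := by nlinarith
        have hv2 : v ^ 2 ≤ (a + v) ^ 2 := by nlinarith
        nlinarith [mul_le_mul hvu hv2 (by positivity) hu.le]

open scoped ENNReal in
lemma oned {a : ℝ} (ha : 0 < a) :
    ∫⁻ r in Set.Ioi (0:ℝ),
        ENNReal.ofReal r * ENNReal.ofReal (if r ≤ a then 1/(a^2*r) else 4/r^3)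
      = ENNReal.ofReal (1/a) + ENNReal.ofReal (4/a) := by
  rw [← Set.Ioc_union_Ioi_eq_Ioi ha.le,
    lintegral_union measurableSet_Ioi (Set.Ioc_disjoint_Ioi le_rfl)]
  congr 1
  · calc
      ∫⁻ r in Set.Ioc (0:ℝ) a,
          ENNReal.ofReal r * ENNReal.ofReal (if r ≤ a then 1/(a^2*r) else 4/r^3)
        = ∫⁻ _ in Set.Ioc (0:ℝ) a, ENNReal.ofReal (1/a^2) := by
          refine setLIntegral_congr_fun measurableSet_Ioc (fun r hr => ?_)
          have hr0 : 0 < r := hr.1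
          rw [if_pos hr.2, ← ENNReal.ofReal_mul hr0.le]
          have h1 : a ^ 2 * r ≠ 0 := by positivity
          congr 1
          field_simp
      _ = ENNReal.ofReal (1/a) := by
          rw [setLIntegral_const, Real.volume_Ioc, ← ENNReal.ofReal_mul (by positivity)]
          congr 1
          field_simp
          ring
  · calc
      ∫⁻ r in Set.Ioi a,
          ENNReal.ofReal r * ENNReal.ofReal (if r ≤ a then 1/(a^2*r) else 4/r^3)
        = ∫⁻ r in Set.Ioi a, ENNReal.ofReal (4 * r ^ (-2:ℝ)) := by
          refine setLIntegral_congr_fun measurableSet_Ioi (fun r hr => ?_)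
          have hr0 : 0 < r := ha.trans hr
          rw [if_neg (not_le.2 hr), ← ENNReal.ofReal_mul hr0.le]
          congr 1
          rw [Real.rpow_neg hr0.le, show ((2:ℝ) : ℝ) = ((2:ℕ) : ℝ) by norm_num,
            Real.rpow_natCast]
          field_simp
      _ = ENNReal.ofReal (∫ r in Set.Ioi a, 4 * r ^ (-2:ℝ)) := by
          refine (ofReal_integral_eq_lintegral_ofReal
            ((integrableOn_Ioi_rpow_of_lt (by norm_num) ha).const_mul 4) ?_).symm
          refine (ae_restrict_iff' measurableSet_Ioi).2 (ae_of_all _ fun r hr => ?_)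
          have hr0 : 0 < r := ha.trans hr
          positivity
      _ = ENNReal.ofReal (4/a) := by
          congr 1
          rw [MeasureTheory.integral_const_mul, integral_Ioi_rpow_of_lt (by norm_num) ha]
          rw [show (-2:ℝ) + 1 = -1 by norm_num, Real.rpow_neg_one]
          field_simp

open scoped ENNReal

/-- For every `t ≥ 0` and `x ∈ ℝ²`,
`∫_{ℝ²} 1/(|y|(e^t+|x−y|)²) dy ≤ C e^{−t}` for a uniform constant `C`. -/
theorem stmt1 :
    ∃ C : ℝ, 0 < C ∧ ∀ t : ℝ, 0 ≤ t → ∀ x : E2,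
      (∫ y : E2, 1 / (‖y‖ * (Real.exp t + ‖x - y‖) ^ 2)) ≤ C * Real.exp (-t) := by
  set S : ℝ≥0∞ := (volume : Measure E2).toSphere Set.univ with hS
  refine ⟨10 * S.toReal + 1, by positivity, fun t ht x => ?_⟩
  set a : ℝ := Real.exp t with ha
  have ha0 : 0 < a := Real.exp_pos t
  set Kr : ℝ → ℝ := fun r => if r ≤ a then 1/(a^2*r) else 4/r^3 with hKr
  set K : ℝ → ℝ≥0∞ := fun r => ENNReal.ofReal (Kr r) with hK
  have hKm : Measurable K := by
    apply Measurable.ennreal_ofReal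
    apply Measurable.ite (measurableSet_le measurable_id measurable_const)
    · exact measurable_const.div (measurable_const.mul measurable_id)
    · exact measurable_const.div (measurable_id.pow_const 3)
  have hKnn : ∀ r : ℝ, 0 < r → 0 ≤ Kr r := fun r hr => by
    simp only [hKr]; split_ifs <;> positivity
  have hFm : Measurable fun y : E2 => 1 / (‖y‖ * (a + ‖x - y‖) ^ 2) := by
    apply Measurable.div measurable_const
    exact measurable_norm.mul
      ((measurable_const.add (measurable_const.sub measurable_id).norm).pow_const 2)
  have hFnn : 0 ≤ᵐ[volume] fun y : E2 => 1 / (‖y‖ * (a + ‖x - y‖) ^ 2) :=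
    Filter.Eventually.of_forall fun y => by positivity
  -- a.e. pointwise bound
  have h0 : ∀ᵐ y : E2, y ≠ 0 := by
    filter_upwards [(Set.countable_singleton (0:E2)).ae_notMem volume] with y hy
    simpa using hy
  have hx : ∀ᵐ y : E2, y ≠ x := by
    filter_upwards [(Set.countable_singleton x).ae_notMem volume] with y hy
    simpa using hy
  have hae : ∀ᵐ y : E2, ENNReal.ofReal (1 / (‖y‖ * (a + ‖x - y‖) ^ 2))
      ≤ K ‖y‖ + K ‖x - y‖ := by
    filter_upwards [h0, hx] with y hy0 hyx
    have hu : 0 < ‖y‖ := norm_pos_iff.2 hy0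
    have hv : 0 < ‖x - y‖ := norm_pos_iff.2 (sub_ne_zero.2 hyx.symm)
    calc
      ENNReal.ofReal (1 / (‖y‖ * (a + ‖x - y‖) ^ 2))
        ≤ ENNReal.ofReal (Kr ‖y‖ + Kr ‖x - y‖) :=
          ENNReal.ofReal_le_ofReal (ptw_bound ha0 hu hv)
      _ = K ‖y‖ + K ‖x - y‖ := ENNReal.ofReal_add (hKnn _ hu) (hKnn _ hv)
  -- radial computation
  have hrad : ∫⁻ (y : E2), K ‖y‖ = S * (ENNReal.ofReal (1/a) + ENNReal.ofReal (4/a)) := by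
    rw [lint_norm_E2 K hKm, oned ha0]
  have hKnm : Measurable fun y : E2 => K ‖y‖ := hKm.comp measurable_norm
  have htrans : ∫⁻ (y : E2), K ‖x - y‖ = ∫⁻ (y : E2), K ‖y‖ := by
    have mp : MeasurePreserving (fun y : E2 => x - y) volume volume :=
      ⟨measurable_const.sub measurable_id, Measure.map_sub_left_eq_self volume x⟩
    exact mp.lintegral_comp hKnm
  have hlint : ∫⁻ (y : E2), ENNReal.ofReal (1 / (‖y‖ * (a + ‖x - y‖) ^ 2))
      ≤ 2 * (S * (ENNReal.ofReal (1/a) + ENNReal.ofReal (4/a))) := by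
    refine (lintegral_mono_ae hae).trans ?_
    rw [lintegral_add_left hKnm, htrans, hrad, two_mul]
  have hne : 2 * (S * (ENNReal.ofReal (1/a) + ENNReal.ofReal (4/a))) ≠ ⊤ := by
    refine ENNReal.mul_ne_top (by norm_num) (ENNReal.mul_ne_top (measure_ne_top _ _) ?_)
    exact ENNReal.add_ne_top.2 ⟨ENNReal.ofReal_ne_top, ENNReal.ofReal_ne_top⟩
  rw [integral_eq_lintegral_of_nonneg_ae hFnn hFm.aestronglyMeasurable]
  refine le_trans (ENNReal.toReal_mono hne hlint) ?_
  rw [ENNReal.toReal_mul, ENNReal.toReal_mul,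
    ENNReal.toReal_add ENNReal.ofReal_ne_top ENNReal.ofReal_ne_top,
    ENNReal.toReal_ofReal (by positivity), ENNReal.toReal_ofReal (by positivity),
    ENNReal.toReal_ofNat]
  rw [Real.exp_neg, ← ha]
  have hS0 : 0 ≤ S.toReal := ENNReal.toReal_nonneg
  have hia : 0 < a⁻¹ := by positivity
  have : 2 * (S.toReal * (1/a + 4/a)) = 10 * S.toReal * a⁻¹ := by
    field_simp
    ring
  rw [this]
  nlinarith [mul_pos hia hia]
end
end

section
/- For any first-order vector field Z ∈ {U_i, S_i, L, R₁₂} with time-dependent coefficients as defined, the commutator with the nonlinear transport operator T_φ := ∂_t + v·∇_x + x·∇_v − μ∇_xφ(t,x)·∇_v satisfies [T_φ, Z] = μ ∇_x(Zφ + c_Z φ)·∇_v, where c_L = −2 and c_Z = 0 for Z ≠ L, and Zφ denotes the action of the associated macroscopic vector field (U_{i,x}=e^t∂_{xⁱ}, S_{i,x}=e^{−t}∂_{xⁱ}, L_x=Σxⁱ∂_{xⁱ}, R₁₂,ₓ=x¹∂_{x²}−x²∂_{x¹}) on φ(t,x). -/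
open Real

noncomputable section

def pt (F : ℝ → E2 → E2 → ℝ) (t : ℝ) (x v : E2) : ℝ :=
  deriv (fun τ => F τ x v) t

def px (F : ℝ → E2 → E2 → ℝ) (i : Fin 2) (t : ℝ) (x v : E2) : ℝ :=
  deriv (fun h : ℝ => F t (x + h • EuclideanSpace.single i (1 : ℝ)) v) 0

def pv (F : ℝ → E2 → E2 → ℝ) (i : Fin 2) (t : ℝ) (x v : E2) : ℝ :=
  deriv (fun h : ℝ => F t x (v + h • EuclideanSpace.single i (1 : ℝ))) 0

/-- Partial derivative in the `i`-th `x`-coordinate of a macroscopic function `ψ(t,x)`. -/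
def pxM (ψ : ℝ → E2 → ℝ) (i : Fin 2) (t : ℝ) (x : E2) : ℝ :=
  deriv (fun h : ℝ => ψ t (x + h • EuclideanSpace.single i (1 : ℝ))) 0

/-- The nonlinear transport operator
`T_φ = ∂_t + v·∇_x + x·∇_v − μ∇_xφ(t,x)·∇_v`. -/
def Tphi (φ : ℝ → E2 → ℝ) (μ : ℝ) (F : ℝ → E2 → E2 → ℝ) (t : ℝ) (x v : E2) : ℝ :=
  pt F t x v + (∑ i, v i * px F i t x v) + (∑ i, x i * pv F i t x v)
    - μ * ∑ i, pxM φ i t x * pv F i t x v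

/-- Microscopic vector fields. -/
def Uop (i : Fin 2) (F : ℝ → E2 → E2 → ℝ) : ℝ → E2 → E2 → ℝ :=
  fun t x v => Real.exp t * (px F i t x v + pv F i t x v)

def Sop (i : Fin 2) (F : ℝ → E2 → E2 → ℝ) : ℝ → E2 → E2 → ℝ :=
  fun t x v => Real.exp (-t) * (px F i t x v - pv F i t x v)

def Lop (F : ℝ → E2 → E2 → ℝ) : ℝ → E2 → E2 → ℝ :=
  fun t x v => ∑ i, (x i * px F i t x v + v i * pv F i t x v)

def Rop (F : ℝ → E2 → E2 → ℝ) : ℝ → E2 → E2 → ℝ :=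
  fun t x v =>
    x 0 * px F 1 t x v - x 1 * px F 0 t x v + v 0 * pv F 1 t x v - v 1 * pv F 0 t x v

/-- Associated macroscopic vector fields acting on `φ(t,x)`. -/
def UxOp (i : Fin 2) (ψ : ℝ → E2 → ℝ) : ℝ → E2 → ℝ :=
  fun t x => Real.exp t * pxM ψ i t x

def SxOp (i : Fin 2) (ψ : ℝ → E2 → ℝ) : ℝ → E2 → ℝ :=
  fun t x => Real.exp (-t) * pxM ψ i t x

def LxOp (ψ : ℝ → E2 → ℝ) : ℝ → E2 → ℝ :=
  fun t x => ∑ i, x i * pxM ψ i t x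

def RxOp (ψ : ℝ → E2 → ℝ) : ℝ → E2 → ℝ :=
  fun t x => x 0 * pxM ψ 1 t x - x 1 * pxM ψ 0 t x


section Aux

variable {E : Type*} [NormedAddCommGroup E] [NormedSpace ℝ E]
variable {F' : Type*} [NormedAddCommGroup F'] [NormedSpace ℝ F']

def DD (w : E) (g : E → ℝ) : E → ℝ := fun p => fderiv ℝ g p w

lemma contDiff_DD {g : E → ℝ} (hg : ContDiff ℝ 2 g) (w : E) : ContDiff ℝ 1 (DD w g) := by
  have h1 : ContDiff ℝ 1 (fderiv ℝ g) := hg.fderiv_right (by norm_num)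
  exact (ContinuousLinearMap.apply ℝ ℝ w).contDiff.comp h1

lemma diff_DD {g : E → ℝ} (hg : ContDiff ℝ 2 g) (w : E) : Differentiable ℝ (DD w g) :=
  (contDiff_DD hg w).differentiable (by norm_num)

lemma DD_symm {g : E → ℝ} (hg : ContDiff ℝ 2 g) (w u : E) (p : E) :
    DD w (DD u g) p = DD u (DD w g) p := by
  have hsym := (hg.contDiffAt (x := p)).isSymmSndFDerivAt (by simp [minSmoothness_of_isRCLikeNormedField])
  have hd : DifferentiableAt ℝ (fderiv ℝ g) p :=
    ((hg.fderiv_right (m := 1) (by norm_num)).differentiable (by norm_num)) p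
  have key : ∀ u w : E, DD w (DD u g) p = fderiv ℝ (fderiv ℝ g) p w u := by
    intro u w
    rw [show DD u g = (fun q => (fderiv ℝ g q) u) from rfl, DD,
      fderiv_clm_apply hd (differentiableAt_const u)]
    simp
  rw [key, key, hsym.eq]

lemma DD_mul {a b : E → ℝ} {p : E} (ha : DifferentiableAt ℝ a p)
    (hb : DifferentiableAt ℝ b p) (w : E) :
    DD w (fun q => a q * b q) p = DD w a p * b p + a p * DD w b p := by
  simp only [DD, fderiv_fun_mul ha hb, ContinuousLinearMap.add_apply, ContinuousLinearMap.smul_apply,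
    smul_eq_mul]
  ring

lemma DD_add {a b : E → ℝ} {p : E} (ha : DifferentiableAt ℝ a p)
    (hb : DifferentiableAt ℝ b p) (w : E) :
    DD w (fun q => a q + b q) p = DD w a p + DD w b p := by
  simp [DD, fderiv_fun_add ha hb]

lemma DD_sub {a b : E → ℝ} {p : E} (ha : DifferentiableAt ℝ a p)
    (hb : DifferentiableAt ℝ b p) (w : E) :
    DD w (fun q => a q - b q) p = DD w a p - DD w b p := by
  simp [DD, fderiv_fun_sub ha hb]

lemma DD_const_mul {b : E → ℝ} {p : E} (c : ℝ)
    (hb : DifferentiableAt ℝ b p) (w : E) :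
    DD w (fun q => c * b q) p = c * DD w b p := by
  simp [DD, fderiv_const_mul hb c]

lemma DD_clm (L : E →L[ℝ] ℝ) (w p : E) : DD w (⇑L) p = L w := by
  simp [DD]

lemma DD_zero (g : E → ℝ) (p : E) : DD (0 : E) g p = 0 := by simp [DD]

lemma DD_comp_clm (h : F' → ℝ) (L : E →L[ℝ] F') {p w : E}
    (hh : DifferentiableAt ℝ h (L p)) :
    DD w (fun q => h (L q)) p = DD (L w) h (L p) := by
  have := (hh.hasFDerivAt.comp p L.hasFDerivAt).fderiv
  simp only [DD, Function.comp_def] at this ⊢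
  rw [this]; rfl

lemma DD_exp_fst (w p : ℝ × F') : DD w (fun q : ℝ × F' => Real.exp q.1) p
    = Real.exp p.1 * w.1 := by
  have h : HasFDerivAt (fun q : ℝ × F' => Real.exp q.1)
      (Real.exp p.1 • ContinuousLinearMap.fst ℝ ℝ F') p :=
    (Real.hasDerivAt_exp p.1).comp_hasFDerivAt p (hasFDerivAt_fst)
  rw [DD, h.fderiv]; simp [mul_comm]

lemma DD_exp_neg_fst (w p : ℝ × F') : DD w (fun q : ℝ × F' => Real.exp (-q.1)) p
    = -(Real.exp (-p.1) * w.1) := by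
  have h0 : HasDerivAt (fun s : ℝ => Real.exp (-s)) (-Real.exp (-p.1)) p.1 := by
    simpa [Function.comp_def] using (Real.hasDerivAt_exp (-p.1)).comp p.1 ((hasDerivAt_id p.1).neg)
  have h : HasFDerivAt (fun q : ℝ × F' => Real.exp (-q.1))
      ((-Real.exp (-p.1)) • ContinuousLinearMap.fst ℝ ℝ F') p :=
    h0.comp_hasFDerivAt p (hasFDerivAt_fst)
  rw [DD, h.fderiv]; simp

end Aux

abbrev P2 := ℝ × E2 × E2
abbrev Q2 := ℝ × E2
def unc (F : ℝ → E2 → E2 → ℝ) : P2 → ℝ := fun p => F p.1 p.2.1 p.2.2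
def uncQ (ψ : ℝ → E2 → ℝ) : Q2 → ℝ := fun q => ψ q.1 q.2
def wt : P2 := (1, 0, 0)
def wx (i : Fin 2) : P2 := (0, EuclideanSpace.single i 1, 0)
def wv (i : Fin 2) : P2 := (0, 0, EuclideanSpace.single i 1)
def qx (i : Fin 2) : Q2 := (0, EuclideanSpace.single i 1)

def cx1 (i : Fin 2) : P2 →L[ℝ] ℝ :=
  (EuclideanSpace.proj i).comp ((ContinuousLinearMap.fst ℝ E2 E2).comp
    (ContinuousLinearMap.snd ℝ ℝ (E2 × E2)))
def cx2 (i : Fin 2) : P2 →L[ℝ] ℝ :=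
  (EuclideanSpace.proj i).comp ((ContinuousLinearMap.snd ℝ E2 E2).comp
    (ContinuousLinearMap.snd ℝ ℝ (E2 × E2)))
def cq (i : Fin 2) : Q2 →L[ℝ] ℝ :=
  (EuclideanSpace.proj i).comp (ContinuousLinearMap.snd ℝ ℝ E2)
def piQ : P2 →L[ℝ] Q2 :=
  (ContinuousLinearMap.fst ℝ ℝ (E2 × E2)).prod
    ((ContinuousLinearMap.fst ℝ E2 E2).comp (ContinuousLinearMap.snd ℝ ℝ (E2 × E2)))

lemma DD_c1 (i : Fin 2) (w p : P2) : DD w (fun p : P2 => p.2.1 i) p = w.2.1 i := by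
  rw [show (fun p : P2 => p.2.1 i) = ⇑(cx1 i) from rfl, DD_clm]; rfl
lemma DD_c2 (i : Fin 2) (w p : P2) : DD w (fun p : P2 => p.2.2 i) p = w.2.2 i := by
  rw [show (fun p : P2 => p.2.2 i) = ⇑(cx2 i) from rfl, DD_clm]; rfl
lemma DD_cq (i : Fin 2) (w q : Q2) : DD w (fun q : Q2 => q.2 i) q = w.2 i := by
  rw [show (fun q : Q2 => q.2 i) = ⇑(cq i) from rfl, DD_clm]; rfl

lemma piQ_mk (t : ℝ) (x v : E2) : piQ (t, x, v) = (t, x) := rfl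
lemma piQ_wt : piQ wt = ((1:ℝ), (0:E2)) := rfl
lemma piQ_wx (i : Fin 2) : piQ (wx i) = qx i := rfl
lemma piQ_wv (i : Fin 2) : piQ (wv i) = (0 : Q2) := by
  simp [piQ, wv, Prod.ext_iff]

lemma wt_1 : wt.1 = 1 := rfl
lemma wt_21 (j : Fin 2) : wt.2.1 j = 0 := rfl
lemma wt_22 (j : Fin 2) : wt.2.2 j = 0 := rfl
lemma wx_1 (i : Fin 2) : (wx i).1 = 0 := rfl
lemma wx_22 (i j : Fin 2) : (wx i).2.2 j = 0 := rfl
lemma wv_1 (i : Fin 2) : (wv i).1 = 0 := rfl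
lemma wv_21 (i j : Fin 2) : (wv i).2.1 j = 0 := rfl
lemma wx_21_00 : (wx 0).2.1 0 = 1 := by simp [wx, EuclideanSpace.single_apply]
lemma wx_21_01 : (wx 0).2.1 1 = 0 := by simp [wx, EuclideanSpace.single_apply]
lemma wx_21_10 : (wx 1).2.1 0 = 0 := by simp [wx, EuclideanSpace.single_apply]
lemma wx_21_11 : (wx 1).2.1 1 = 1 := by simp [wx, EuclideanSpace.single_apply]
lemma wv_22_00 : (wv 0).2.2 0 = 1 := by simp [wv, EuclideanSpace.single_apply]
lemma wv_22_01 : (wv 0).2.2 1 = 0 := by simp [wv, EuclideanSpace.single_apply]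
lemma wv_22_10 : (wv 1).2.2 0 = 0 := by simp [wv, EuclideanSpace.single_apply]
lemma wv_22_11 : (wv 1).2.2 1 = 1 := by simp [wv, EuclideanSpace.single_apply]
lemma qx_1 (i : Fin 2) : (qx i).1 = 0 := rfl
lemma qx_2_00 : (qx 0).2 0 = 1 := by simp [qx, EuclideanSpace.single_apply]
lemma qx_2_01 : (qx 0).2 1 = 0 := by simp [qx, EuclideanSpace.single_apply]
lemma qx_2_10 : (qx 1).2 0 = 0 := by simp [qx, EuclideanSpace.single_apply]
lemma qx_2_11 : (qx 1).2 1 = 1 := by simp [qx, EuclideanSpace.single_apply]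

lemma pt_eq (F : ℝ → E2 → E2 → ℝ) {t : ℝ} {x v : E2}
    (h : DifferentiableAt ℝ (unc F) (t, x, v)) :
    deriv (fun τ => F τ x v) t = DD wt (unc F) (t, x, v) := by
  have hc : HasDerivAt (fun τ : ℝ => ((τ, x, v) : P2)) wt t :=
    (hasDerivAt_id t).prodMk (hasDerivAt_const t (x, v))
  exact (h.hasFDerivAt.comp_hasDerivAt t hc).deriv

lemma px_eq (F : ℝ → E2 → E2 → ℝ) (i : Fin 2) {t : ℝ} {x v : E2}
    (h : DifferentiableAt ℝ (unc F) (t, x, v)) :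
    deriv (fun h : ℝ => F t (x + h • EuclideanSpace.single i (1 : ℝ)) v) 0
      = DD (wx i) (unc F) (t, x, v) := by
  have hc : HasDerivAt (fun h : ℝ => ((t, x + h • EuclideanSpace.single i (1:ℝ), v) : P2))
      (wx i) 0 := by
    refine (hasDerivAt_const 0 t).prodMk (HasDerivAt.prodMk ?_ (hasDerivAt_const 0 v))
    simpa using ((hasDerivAt_id (0:ℝ)).smul_const (EuclideanSpace.single i (1:ℝ))).const_add x
  have h0 : ((t, x + (0:ℝ) • EuclideanSpace.single i (1:ℝ), v) : P2) = (t, x, v) := by simp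
  have h' : DifferentiableAt ℝ (unc F)
      ((fun h : ℝ => ((t, x + h • EuclideanSpace.single i (1:ℝ), v) : P2)) 0) := by
    simpa [h0] using h
  have := (h'.hasFDerivAt.comp_hasDerivAt 0 hc).deriv
  simp only [Function.comp_def] at this
  calc deriv (fun h : ℝ => F t (x + h • EuclideanSpace.single i (1:ℝ)) v) 0
      = fderiv ℝ (unc F) (t, x + (0:ℝ) • EuclideanSpace.single i (1:ℝ), v) (wx i) := this
    _ = DD (wx i) (unc F) (t, x, v) := by rw [h0]; rfl

lemma pv_eq (F : ℝ → E2 → E2 → ℝ) (i : Fin 2) {t : ℝ} {x v : E2}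
    (h : DifferentiableAt ℝ (unc F) (t, x, v)) :
    deriv (fun h : ℝ => F t x (v + h • EuclideanSpace.single i (1 : ℝ))) 0
      = DD (wv i) (unc F) (t, x, v) := by
  have hc : HasDerivAt (fun h : ℝ => ((t, x, v + h • EuclideanSpace.single i (1:ℝ)) : P2))
      (wv i) 0 := by
    refine (hasDerivAt_const 0 t).prodMk (HasDerivAt.prodMk (hasDerivAt_const 0 x) ?_)
    simpa using ((hasDerivAt_id (0:ℝ)).smul_const (EuclideanSpace.single i (1:ℝ))).const_add v
  have h0 : ((t, x, v + (0:ℝ) • EuclideanSpace.single i (1:ℝ)) : P2) = (t, x, v) := by simp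
  have h' : DifferentiableAt ℝ (unc F)
      ((fun h : ℝ => ((t, x, v + h • EuclideanSpace.single i (1:ℝ)) : P2)) 0) := by
    simpa [h0] using h
  have := (h'.hasFDerivAt.comp_hasDerivAt 0 hc).deriv
  simp only [Function.comp_def] at this
  calc deriv (fun h : ℝ => F t x (v + h • EuclideanSpace.single i (1:ℝ))) 0
      = fderiv ℝ (unc F) (t, x, v + (0:ℝ) • EuclideanSpace.single i (1:ℝ)) (wv i) := this
    _ = DD (wv i) (unc F) (t, x, v) := by rw [h0]; rfl

lemma pxM_eq (ψ : ℝ → E2 → ℝ) (i : Fin 2) {t : ℝ} {x : E2}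
    (h : DifferentiableAt ℝ (uncQ ψ) (t, x)) :
    deriv (fun h : ℝ => ψ t (x + h • EuclideanSpace.single i (1 : ℝ))) 0
      = DD (qx i) (uncQ ψ) (t, x) := by
  have hc : HasDerivAt (fun h : ℝ => ((t, x + h • EuclideanSpace.single i (1:ℝ)) : Q2))
      (qx i) 0 := by
    refine (hasDerivAt_const 0 t).prodMk ?_
    simpa using ((hasDerivAt_id (0:ℝ)).smul_const (EuclideanSpace.single i (1:ℝ))).const_add x
  have h0 : ((t, x + (0:ℝ) • EuclideanSpace.single i (1:ℝ)) : Q2) = (t, x) := by simp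
  have h' : DifferentiableAt ℝ (uncQ ψ)
      ((fun h : ℝ => ((t, x + h • EuclideanSpace.single i (1:ℝ)) : Q2)) 0) := by
    simpa [h0] using h
  have := (h'.hasFDerivAt.comp_hasDerivAt 0 hc).deriv
  simp only [Function.comp_def] at this
  calc deriv (fun h : ℝ => ψ t (x + h • EuclideanSpace.single i (1:ℝ))) 0
      = fderiv ℝ (uncQ ψ) (t, x + (0:ℝ) • EuclideanSpace.single i (1:ℝ)) (qx i) := this
    _ = DD (qx i) (uncQ ψ) (t, x) := by rw [h0]; rfl

section Ops
variable (φ : ℝ → E2 → ℝ) (f : ℝ → E2 → E2 → ℝ) (μ : ℝ)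

lemma unc_Uop (hf : Differentiable ℝ (unc f)) (i : Fin 2) :
    unc (Uop i f) = fun p => Real.exp p.1 * (DD (wx i) (unc f) p + DD (wv i) (unc f) p) := by
  funext p; obtain ⟨t, x, v⟩ := p
  show Real.exp t * (px f i t x v + pv f i t x v) = _
  simp only [px, pv]
  rw [px_eq f i (hf _), pv_eq f i (hf _)]

lemma unc_Sop (hf : Differentiable ℝ (unc f)) (i : Fin 2) :
    unc (Sop i f) = fun p =>
      Real.exp (-p.1) * (DD (wx i) (unc f) p - DD (wv i) (unc f) p) := by
  funext p; obtain ⟨t, x, v⟩ := p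
  show Real.exp (-t) * (px f i t x v - pv f i t x v) = _
  simp only [px, pv]
  rw [px_eq f i (hf _), pv_eq f i (hf _)]

lemma unc_Lop (hf : Differentiable ℝ (unc f)) :
    unc (Lop f) = fun p =>
      (p.2.1 0 * DD (wx 0) (unc f) p + p.2.2 0 * DD (wv 0) (unc f) p)
        + (p.2.1 1 * DD (wx 1) (unc f) p + p.2.2 1 * DD (wv 1) (unc f) p) := by
  funext p; obtain ⟨t, x, v⟩ := p
  show (∑ i, (x i * px f i t x v + v i * pv f i t x v)) = _
  rw [Fin.sum_univ_two]
  simp only [px, pv]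
  rw [px_eq f 0 (hf _), pv_eq f 0 (hf _), px_eq f 1 (hf _), pv_eq f 1 (hf _)]

lemma unc_Rop (hf : Differentiable ℝ (unc f)) :
    unc (Rop f) = fun p =>
      p.2.1 0 * DD (wx 1) (unc f) p - p.2.1 1 * DD (wx 0) (unc f) p
        + p.2.2 0 * DD (wv 1) (unc f) p - p.2.2 1 * DD (wv 0) (unc f) p := by
  funext p; obtain ⟨t, x, v⟩ := p
  show x 0 * px f 1 t x v - x 1 * px f 0 t x v + v 0 * pv f 1 t x v - v 1 * pv f 0 t x v = _
  simp only [px, pv]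
  rw [px_eq f 0 (hf _), pv_eq f 0 (hf _), px_eq f 1 (hf _), pv_eq f 1 (hf _)]

lemma unc_Tphi (hφ : Differentiable ℝ (uncQ φ)) (hf : Differentiable ℝ (unc f)) :
    unc (Tphi φ μ f) = fun p =>
      DD wt (unc f) p
        + (p.2.2 0 * DD (wx 0) (unc f) p + p.2.2 1 * DD (wx 1) (unc f) p)
        + (p.2.1 0 * DD (wv 0) (unc f) p + p.2.1 1 * DD (wv 1) (unc f) p)
        - μ * (DD (qx 0) (uncQ φ) (piQ p) * DD (wv 0) (unc f) p
            + DD (qx 1) (uncQ φ) (piQ p) * DD (wv 1) (unc f) p) := by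
  funext p; obtain ⟨t, x, v⟩ := p
  show pt f t x v + (∑ i, v i * px f i t x v) + (∑ i, x i * pv f i t x v)
      - μ * ∑ i, pxM φ i t x * pv f i t x v = _
  rw [Fin.sum_univ_two, Fin.sum_univ_two, Fin.sum_univ_two]
  simp only [pt, px, pv, pxM]
  rw [pt_eq f (hf _), px_eq f 0 (hf _), px_eq f 1 (hf _), pv_eq f 0 (hf _), pv_eq f 1 (hf _),
    pxM_eq φ 0 (hφ _), pxM_eq φ 1 (hφ _)]
  rfl

lemma uncQ_UxOp (hφ : Differentiable ℝ (uncQ φ)) (i : Fin 2) :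
    uncQ (UxOp i φ) = fun q => Real.exp q.1 * DD (qx i) (uncQ φ) q := by
  funext q; obtain ⟨t, x⟩ := q
  show Real.exp t * pxM φ i t x = _
  simp only [pxM]
  rw [pxM_eq φ i (hφ _)]

lemma uncQ_SxOp (hφ : Differentiable ℝ (uncQ φ)) (i : Fin 2) :
    uncQ (SxOp i φ) = fun q => Real.exp (-q.1) * DD (qx i) (uncQ φ) q := by
  funext q; obtain ⟨t, x⟩ := q
  show Real.exp (-t) * pxM φ i t x = _
  simp only [pxM]
  rw [pxM_eq φ i (hφ _)]

lemma uncQ_LxOp (hφ : Differentiable ℝ (uncQ φ)) :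
    uncQ (fun t x => LxOp φ t x + (-2 : ℝ) * φ t x) = fun q =>
      (q.2 0 * DD (qx 0) (uncQ φ) q + q.2 1 * DD (qx 1) (uncQ φ) q)
        + (-2 : ℝ) * uncQ φ q := by
  funext q; obtain ⟨t, x⟩ := q
  show (∑ i, x i * pxM φ i t x) + (-2 : ℝ) * φ t x = _
  rw [Fin.sum_univ_two]
  simp only [pxM]
  rw [pxM_eq φ 0 (hφ _), pxM_eq φ 1 (hφ _)]
  rfl

lemma uncQ_RxOp (hφ : Differentiable ℝ (uncQ φ)) :
    uncQ (RxOp φ) = fun q =>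
      q.2 0 * DD (qx 1) (uncQ φ) q - q.2 1 * DD (qx 0) (uncQ φ) q := by
  funext q; obtain ⟨t, x⟩ := q
  show x 0 * pxM φ 1 t x - x 1 * pxM φ 0 t x = _
  simp only [pxM]
  rw [pxM_eq φ 0 (hφ _), pxM_eq φ 1 (hφ _)]

end Ops

section Diffs
variable (φ : ℝ → E2 → ℝ) (f : ℝ → E2 → E2 → ℝ) (μ : ℝ)

lemma diff_exp1 : Differentiable ℝ (fun p : P2 => Real.exp p.1) :=
  Real.differentiable_exp.comp differentiable_fst
lemma diff_expQ : Differentiable ℝ (fun q : Q2 => Real.exp q.1) :=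
  Real.differentiable_exp.comp differentiable_fst
lemma diff_expneg1 : Differentiable ℝ (fun p : P2 => Real.exp (-p.1)) :=
  Real.differentiable_exp.comp differentiable_fst.neg
lemma diff_expnegQ : Differentiable ℝ (fun q : Q2 => Real.exp (-q.1)) :=
  Real.differentiable_exp.comp differentiable_fst.neg
lemma diff_c1 (i : Fin 2) : Differentiable ℝ (fun p : P2 => p.2.1 i) :=
  (cx1 i).differentiable
lemma diff_c2 (i : Fin 2) : Differentiable ℝ (fun p : P2 => p.2.2 i) :=
  (cx2 i).differentiable
lemma diff_cq (i : Fin 2) : Differentiable ℝ (fun q : Q2 => q.2 i) :=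
  (cq i).differentiable

lemma diff_PhiP (hφ : ContDiff ℝ 2 (uncQ φ)) (i : Fin 2) :
    Differentiable ℝ (fun p : P2 => DD (qx i) (uncQ φ) (piQ p)) :=
  (diff_DD hφ (qx i)).comp piQ.differentiable

lemma diff_unc_Uop (hf : ContDiff ℝ 2 (unc f)) (i : Fin 2) :
    Differentiable ℝ (unc (Uop i f)) := by
  rw [unc_Uop f (hf.differentiable (by norm_num)) i]
  exact (diff_exp1).mul ((diff_DD hf _).add (diff_DD hf _))

lemma diff_unc_Sop (hf : ContDiff ℝ 2 (unc f)) (i : Fin 2) :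
    Differentiable ℝ (unc (Sop i f)) := by
  rw [unc_Sop f (hf.differentiable (by norm_num)) i]
  exact (diff_expneg1).mul ((diff_DD hf _).sub (diff_DD hf _))

lemma diff_unc_Lop (hf : ContDiff ℝ 2 (unc f)) :
    Differentiable ℝ (unc (Lop f)) := by
  rw [unc_Lop f (hf.differentiable (by norm_num))]
  exact (((diff_c1 0).mul (diff_DD hf _)).add ((diff_c2 0).mul (diff_DD hf _))).add
    (((diff_c1 1).mul (diff_DD hf _)).add ((diff_c2 1).mul (diff_DD hf _)))

lemma diff_unc_Rop (hf : ContDiff ℝ 2 (unc f)) :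
    Differentiable ℝ (unc (Rop f)) := by
  rw [unc_Rop f (hf.differentiable (by norm_num))]
  exact ((((diff_c1 0).mul (diff_DD hf _)).sub ((diff_c1 1).mul (diff_DD hf _))).add
    ((diff_c2 0).mul (diff_DD hf _))).sub ((diff_c2 1).mul (diff_DD hf _))

lemma diff_unc_Tphi (hφ : ContDiff ℝ 2 (uncQ φ)) (hf : ContDiff ℝ 2 (unc f)) :
    Differentiable ℝ (unc (Tphi φ μ f)) := by
  rw [unc_Tphi φ f μ (hφ.differentiable (by norm_num)) (hf.differentiable (by norm_num))]
  exact (((diff_DD hf _).add (((diff_c2 0).mul (diff_DD hf _)).add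
      ((diff_c2 1).mul (diff_DD hf _)))).add
    (((diff_c1 0).mul (diff_DD hf _)).add ((diff_c1 1).mul (diff_DD hf _)))).sub
    ((differentiable_const μ).mul
      (((diff_PhiP φ hφ 0).mul (diff_DD hf _)).add ((diff_PhiP φ hφ 1).mul (diff_DD hf _))))

end Diffs

section Expand
variable (φ : ℝ → E2 → ℝ) (f : ℝ → E2 → E2 → ℝ) (μ : ℝ)

lemma DD_mul_c1 (hf : ContDiff ℝ 2 (unc f)) (i : Fin 2) (u w p : P2) :
    DD w (fun p : P2 => p.2.1 i * DD u (unc f) p) p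
      = w.2.1 i * DD u (unc f) p + p.2.1 i * DD w (DD u (unc f)) p := by
  rw [DD_mul ((diff_c1 i).differentiableAt) ((diff_DD hf u) p) w, DD_c1]

lemma DD_mul_c2 (hf : ContDiff ℝ 2 (unc f)) (i : Fin 2) (u w p : P2) :
    DD w (fun p : P2 => p.2.2 i * DD u (unc f) p) p
      = w.2.2 i * DD u (unc f) p + p.2.2 i * DD w (DD u (unc f)) p := by
  rw [DD_mul ((diff_c2 i).differentiableAt) ((diff_DD hf u) p) w, DD_c2]

lemma DD_mul_cq (hφ : ContDiff ℝ 2 (uncQ φ)) (i : Fin 2) (u w q : Q2) :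
    DD w (fun q : Q2 => q.2 i * DD u (uncQ φ) q) q
      = w.2 i * DD u (uncQ φ) q + q.2 i * DD w (DD u (uncQ φ)) q := by
  rw [DD_mul ((diff_cq i).differentiableAt) ((diff_DD hφ u) q) w, DD_cq]

lemma DD_mul_Phi (hφ : ContDiff ℝ 2 (uncQ φ)) (hf : ContDiff ℝ 2 (unc f))
    (i : Fin 2) (u w p : P2) :
    DD w (fun p : P2 => DD (qx i) (uncQ φ) (piQ p) * DD u (unc f) p) p
      = DD (piQ w) (DD (qx i) (uncQ φ)) (piQ p) * DD u (unc f) p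
        + DD (qx i) (uncQ φ) (piQ p) * DD w (DD u (unc f)) p := by
  rw [DD_mul ((diff_PhiP φ hφ i).differentiableAt) ((diff_DD hf u) p) w,
    DD_comp_clm (DD (qx i) (uncQ φ)) piQ ((diff_DD hφ (qx i)) _)]

lemma DD_unc_Uop (hf : ContDiff ℝ 2 (unc f)) (i : Fin 2) (w p : P2) :
    DD w (unc (Uop i f)) p
      = Real.exp p.1 * w.1 * (DD (wx i) (unc f) p + DD (wv i) (unc f) p)
        + Real.exp p.1 * (DD w (DD (wx i) (unc f)) p + DD w (DD (wv i) (unc f)) p) := by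
  rw [unc_Uop f (hf.differentiable (by norm_num)) i,
    DD_mul (diff_exp1.differentiableAt) (((diff_DD hf (wx i)).fun_add (diff_DD hf (wv i))).differentiableAt) w,
    DD_exp_fst, DD_add ((diff_DD hf (wx i)) p) ((diff_DD hf (wv i)) p) w]

lemma DD_unc_Sop (hf : ContDiff ℝ 2 (unc f)) (i : Fin 2) (w p : P2) :
    DD w (unc (Sop i f)) p
      = -(Real.exp (-p.1) * w.1) * (DD (wx i) (unc f) p - DD (wv i) (unc f) p)
        + Real.exp (-p.1) * (DD w (DD (wx i) (unc f)) p - DD w (DD (wv i) (unc f)) p) := by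
  rw [unc_Sop f (hf.differentiable (by norm_num)) i,
    DD_mul (diff_expneg1.differentiableAt) (((diff_DD hf (wx i)).fun_sub (diff_DD hf (wv i))).differentiableAt) w,
    DD_exp_neg_fst, DD_sub ((diff_DD hf (wx i)) p) ((diff_DD hf (wv i)) p) w]

lemma DD_unc_Lop (hf : ContDiff ℝ 2 (unc f)) (w p : P2) :
    DD w (unc (Lop f)) p
      = ((w.2.1 0 * DD (wx 0) (unc f) p + p.2.1 0 * DD w (DD (wx 0) (unc f)) p)
          + (w.2.2 0 * DD (wv 0) (unc f) p + p.2.2 0 * DD w (DD (wv 0) (unc f)) p))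
        + ((w.2.1 1 * DD (wx 1) (unc f) p + p.2.1 1 * DD w (DD (wx 1) (unc f)) p)
          + (w.2.2 1 * DD (wv 1) (unc f) p + p.2.2 1 * DD w (DD (wv 1) (unc f)) p)) := by
  have m10 : DifferentiableAt ℝ (fun p : P2 => p.2.1 0 * DD (wx 0) (unc f) p) p :=
    ((diff_c1 0).mul (diff_DD hf _)) p
  have m20 : DifferentiableAt ℝ (fun p : P2 => p.2.2 0 * DD (wv 0) (unc f) p) p :=
    ((diff_c2 0).mul (diff_DD hf _)) p
  have m11 : DifferentiableAt ℝ (fun p : P2 => p.2.1 1 * DD (wx 1) (unc f) p) p :=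
    ((diff_c1 1).mul (diff_DD hf _)) p
  have m21 : DifferentiableAt ℝ (fun p : P2 => p.2.2 1 * DD (wv 1) (unc f) p) p :=
    ((diff_c2 1).mul (diff_DD hf _)) p
  rw [unc_Lop f (hf.differentiable (by norm_num)),
    DD_add (m10.fun_add m20) (m11.fun_add m21) w, DD_add m10 m20 w, DD_add m11 m21 w,
    DD_mul_c1 f hf 0 (wx 0) w p, DD_mul_c2 f hf 0 (wv 0) w p,
    DD_mul_c1 f hf 1 (wx 1) w p, DD_mul_c2 f hf 1 (wv 1) w p]

lemma DD_unc_Rop (hf : ContDiff ℝ 2 (unc f)) (w p : P2) :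
    DD w (unc (Rop f)) p
      = ((w.2.1 0 * DD (wx 1) (unc f) p + p.2.1 0 * DD w (DD (wx 1) (unc f)) p)
          - (w.2.1 1 * DD (wx 0) (unc f) p + p.2.1 1 * DD w (DD (wx 0) (unc f)) p)
          + (w.2.2 0 * DD (wv 1) (unc f) p + p.2.2 0 * DD w (DD (wv 1) (unc f)) p))
        - (w.2.2 1 * DD (wv 0) (unc f) p + p.2.2 1 * DD w (DD (wv 0) (unc f)) p) := by
  have m10 : DifferentiableAt ℝ (fun p : P2 => p.2.1 0 * DD (wx 1) (unc f) p) p :=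
    ((diff_c1 0).mul (diff_DD hf _)) p
  have m11 : DifferentiableAt ℝ (fun p : P2 => p.2.1 1 * DD (wx 0) (unc f) p) p :=
    ((diff_c1 1).mul (diff_DD hf _)) p
  have m20 : DifferentiableAt ℝ (fun p : P2 => p.2.2 0 * DD (wv 1) (unc f) p) p :=
    ((diff_c2 0).mul (diff_DD hf _)) p
  have m21 : DifferentiableAt ℝ (fun p : P2 => p.2.2 1 * DD (wv 0) (unc f) p) p :=
    ((diff_c2 1).mul (diff_DD hf _)) p
  rw [unc_Rop f (hf.differentiable (by norm_num)),
    DD_sub ((m10.fun_sub m11).fun_add m20) m21 w, DD_add (m10.fun_sub m11) m20 w, DD_sub m10 m11 w,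
    DD_mul_c1 f hf 0 (wx 1) w p, DD_mul_c1 f hf 1 (wx 0) w p,
    DD_mul_c2 f hf 0 (wv 1) w p, DD_mul_c2 f hf 1 (wv 0) w p]

lemma DD_unc_Tphi (hφ : ContDiff ℝ 2 (uncQ φ)) (hf : ContDiff ℝ 2 (unc f)) (w p : P2) :
    DD w (unc (Tphi φ μ f)) p
      = DD w (DD wt (unc f)) p
        + ((w.2.2 0 * DD (wx 0) (unc f) p + p.2.2 0 * DD w (DD (wx 0) (unc f)) p)
          + (w.2.2 1 * DD (wx 1) (unc f) p + p.2.2 1 * DD w (DD (wx 1) (unc f)) p))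
        + ((w.2.1 0 * DD (wv 0) (unc f) p + p.2.1 0 * DD w (DD (wv 0) (unc f)) p)
          + (w.2.1 1 * DD (wv 1) (unc f) p + p.2.1 1 * DD w (DD (wv 1) (unc f)) p))
        - μ * ((DD (piQ w) (DD (qx 0) (uncQ φ)) (piQ p) * DD (wv 0) (unc f) p
              + DD (qx 0) (uncQ φ) (piQ p) * DD w (DD (wv 0) (unc f)) p)
            + (DD (piQ w) (DD (qx 1) (uncQ φ)) (piQ p) * DD (wv 1) (unc f) p
              + DD (qx 1) (uncQ φ) (piQ p) * DD w (DD (wv 1) (unc f)) p)) := by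
  have d0 : DifferentiableAt ℝ (DD wt (unc f)) p := (diff_DD hf wt) p
  have m20 : DifferentiableAt ℝ (fun p : P2 => p.2.2 0 * DD (wx 0) (unc f) p) p :=
    ((diff_c2 0).mul (diff_DD hf _)) p
  have m21 : DifferentiableAt ℝ (fun p : P2 => p.2.2 1 * DD (wx 1) (unc f) p) p :=
    ((diff_c2 1).mul (diff_DD hf _)) p
  have m10 : DifferentiableAt ℝ (fun p : P2 => p.2.1 0 * DD (wv 0) (unc f) p) p :=
    ((diff_c1 0).mul (diff_DD hf _)) p
  have m11 : DifferentiableAt ℝ (fun p : P2 => p.2.1 1 * DD (wv 1) (unc f) p) p :=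
    ((diff_c1 1).mul (diff_DD hf _)) p
  have mp0 : DifferentiableAt ℝ
      (fun p : P2 => DD (qx 0) (uncQ φ) (piQ p) * DD (wv 0) (unc f) p) p :=
    ((diff_PhiP φ hφ 0).mul (diff_DD hf _)) p
  have mp1 : DifferentiableAt ℝ
      (fun p : P2 => DD (qx 1) (uncQ φ) (piQ p) * DD (wv 1) (unc f) p) p :=
    ((diff_PhiP φ hφ 1).mul (diff_DD hf _)) p
  rw [unc_Tphi φ f μ (hφ.differentiable (by norm_num)) (hf.differentiable (by norm_num)),
    DD_sub ((d0.fun_add (m20.fun_add m21)).fun_add (m10.fun_add m11)) ((mp0.fun_add mp1).const_mul μ) w,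
    DD_add (d0.fun_add (m20.fun_add m21)) (m10.fun_add m11) w,
    DD_add d0 (m20.fun_add m21) w, DD_add m20 m21 w, DD_add m10 m11 w,
    DD_const_mul μ (mp0.fun_add mp1) w, DD_add mp0 mp1 w,
    DD_mul_c2 f hf 0 (wx 0) w p, DD_mul_c2 f hf 1 (wx 1) w p,
    DD_mul_c1 f hf 0 (wv 0) w p, DD_mul_c1 f hf 1 (wv 1) w p,
    DD_mul_Phi φ f hφ hf 0 (wv 0) w p, DD_mul_Phi φ f hφ hf 1 (wv 1) w p]

end Expand

section Vals
variable (φ : ℝ → E2 → ℝ) (μ : ℝ)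

lemma Uop_val (F : ℝ → E2 → E2 → ℝ) (hF : Differentiable ℝ (unc F)) (i : Fin 2)
    (t : ℝ) (x v : E2) :
    Uop i F t x v
      = Real.exp t * (DD (wx i) (unc F) (t, x, v) + DD (wv i) (unc F) (t, x, v)) :=
  congrFun (unc_Uop F hF i) (t, x, v)

lemma Sop_val (F : ℝ → E2 → E2 → ℝ) (hF : Differentiable ℝ (unc F)) (i : Fin 2)
    (t : ℝ) (x v : E2) :
    Sop i F t x v
      = Real.exp (-t) * (DD (wx i) (unc F) (t, x, v) - DD (wv i) (unc F) (t, x, v)) :=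
  congrFun (unc_Sop F hF i) (t, x, v)

lemma Lop_val (F : ℝ → E2 → E2 → ℝ) (hF : Differentiable ℝ (unc F))
    (t : ℝ) (x v : E2) :
    Lop F t x v
      = (x 0 * DD (wx 0) (unc F) (t, x, v) + v 0 * DD (wv 0) (unc F) (t, x, v))
        + (x 1 * DD (wx 1) (unc F) (t, x, v) + v 1 * DD (wv 1) (unc F) (t, x, v)) :=
  congrFun (unc_Lop F hF) (t, x, v)

lemma Rop_val (F : ℝ → E2 → E2 → ℝ) (hF : Differentiable ℝ (unc F))
    (t : ℝ) (x v : E2) :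
    Rop F t x v
      = x 0 * DD (wx 1) (unc F) (t, x, v) - x 1 * DD (wx 0) (unc F) (t, x, v)
        + v 0 * DD (wv 1) (unc F) (t, x, v) - v 1 * DD (wv 0) (unc F) (t, x, v) :=
  congrFun (unc_Rop F hF) (t, x, v)

lemma Tphi_val (F : ℝ → E2 → E2 → ℝ) (hφd : Differentiable ℝ (uncQ φ))
    (hF : Differentiable ℝ (unc F)) (t : ℝ) (x v : E2) :
    Tphi φ μ F t x v
      = DD wt (unc F) (t, x, v)
        + (v 0 * DD (wx 0) (unc F) (t, x, v) + v 1 * DD (wx 1) (unc F) (t, x, v))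
        + (x 0 * DD (wv 0) (unc F) (t, x, v) + x 1 * DD (wv 1) (unc F) (t, x, v))
        - μ * (DD (qx 0) (uncQ φ) (t, x) * DD (wv 0) (unc F) (t, x, v)
            + DD (qx 1) (uncQ φ) (t, x) * DD (wv 1) (unc F) (t, x, v)) :=
  congrFun (unc_Tphi φ F μ hφd hF) (t, x, v)

lemma pv_val (F : ℝ → E2 → E2 → ℝ) (hF : Differentiable ℝ (unc F)) (k : Fin 2)
    (t : ℝ) (x v : E2) :
    pv F k t x v = DD (wv k) (unc F) (t, x, v) :=
  pv_eq F k (hF _)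

lemma pxM_UxOp_val (hφ : ContDiff ℝ 2 (uncQ φ)) (i k : Fin 2) (t : ℝ) (x : E2) :
    pxM (UxOp i φ) k t x = Real.exp t * DD (qx k) (DD (qx i) (uncQ φ)) (t, x) := by
  have hφd := hφ.differentiable (by norm_num)
  have hd : Differentiable ℝ (uncQ (UxOp i φ)) := by
    rw [uncQ_UxOp φ hφd i]; exact diff_expQ.mul (diff_DD hφ _)
  have e1 : pxM (UxOp i φ) k t x = DD (qx k) (uncQ (UxOp i φ)) (t, x) :=
    pxM_eq (UxOp i φ) k (hd _)
  rw [e1, uncQ_UxOp φ hφd i,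
    DD_mul (diff_expQ.differentiableAt) ((diff_DD hφ (qx i)) _) (qx k), DD_exp_fst]
  simp [qx_1]

lemma pxM_SxOp_val (hφ : ContDiff ℝ 2 (uncQ φ)) (i k : Fin 2) (t : ℝ) (x : E2) :
    pxM (SxOp i φ) k t x = Real.exp (-t) * DD (qx k) (DD (qx i) (uncQ φ)) (t, x) := by
  have hφd := hφ.differentiable (by norm_num)
  have hd : Differentiable ℝ (uncQ (SxOp i φ)) := by
    rw [uncQ_SxOp φ hφd i]; exact diff_expnegQ.mul (diff_DD hφ _)
  have e1 : pxM (SxOp i φ) k t x = DD (qx k) (uncQ (SxOp i φ)) (t, x) :=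
    pxM_eq (SxOp i φ) k (hd _)
  rw [e1, uncQ_SxOp φ hφd i,
    DD_mul (diff_expnegQ.differentiableAt) ((diff_DD hφ (qx i)) _) (qx k), DD_exp_neg_fst]
  simp [qx_1]

lemma pxM_LxOp_val (hφ : ContDiff ℝ 2 (uncQ φ)) (k : Fin 2) (t : ℝ) (x : E2) :
    pxM (fun t x => LxOp φ t x + (-2 : ℝ) * φ t x) k t x
      = (((qx k).2 0 * DD (qx 0) (uncQ φ) (t, x)
            + x 0 * DD (qx k) (DD (qx 0) (uncQ φ)) (t, x))
          + ((qx k).2 1 * DD (qx 1) (uncQ φ) (t, x)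
            + x 1 * DD (qx k) (DD (qx 1) (uncQ φ)) (t, x)))
        + (-2 : ℝ) * DD (qx k) (uncQ φ) (t, x) := by
  have hφd := hφ.differentiable (by norm_num)
  have m0 : Differentiable ℝ (fun q : Q2 => q.2 0 * DD (qx 0) (uncQ φ) q) :=
    (diff_cq 0).mul (diff_DD hφ _)
  have m1 : Differentiable ℝ (fun q : Q2 => q.2 1 * DD (qx 1) (uncQ φ) q) :=
    (diff_cq 1).mul (diff_DD hφ _)
  have hd : Differentiable ℝ (uncQ (fun t x => LxOp φ t x + (-2 : ℝ) * φ t x)) := by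
    rw [uncQ_LxOp φ hφd]
    exact (m0.add m1).add (hφd.const_mul (-2 : ℝ))
  have e1 : pxM (fun t x => LxOp φ t x + (-2 : ℝ) * φ t x) k t x
      = DD (qx k) (uncQ (fun t x => LxOp φ t x + (-2 : ℝ) * φ t x)) (t, x) :=
    pxM_eq _ k (hd _)
  rw [e1, uncQ_LxOp φ hφd,
    DD_add ((m0.fun_add m1) (t, x)) ((hφd.const_mul (-2 : ℝ)) (t, x)) (qx k),
    DD_add (m0 (t, x)) (m1 (t, x)) (qx k),
    DD_const_mul (-2 : ℝ) (hφd (t, x)) (qx k),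
    DD_mul_cq φ hφ 0 (qx 0) (qx k) (t, x), DD_mul_cq φ hφ 1 (qx 1) (qx k) (t, x)]

lemma pxM_RxOp_val (hφ : ContDiff ℝ 2 (uncQ φ)) (k : Fin 2) (t : ℝ) (x : E2) :
    pxM (RxOp φ) k t x
      = ((qx k).2 0 * DD (qx 1) (uncQ φ) (t, x)
            + x 0 * DD (qx k) (DD (qx 1) (uncQ φ)) (t, x))
        - ((qx k).2 1 * DD (qx 0) (uncQ φ) (t, x)
            + x 1 * DD (qx k) (DD (qx 0) (uncQ φ)) (t, x)) := by
  have hφd := hφ.differentiable (by norm_num)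
  have m0 : Differentiable ℝ (fun q : Q2 => q.2 0 * DD (qx 1) (uncQ φ) q) :=
    (diff_cq 0).mul (diff_DD hφ _)
  have m1 : Differentiable ℝ (fun q : Q2 => q.2 1 * DD (qx 0) (uncQ φ) q) :=
    (diff_cq 1).mul (diff_DD hφ _)
  have hd : Differentiable ℝ (uncQ (RxOp φ)) := by
    rw [uncQ_RxOp φ hφd]; exact m0.sub m1
  have e1 : pxM (RxOp φ) k t x = DD (qx k) (uncQ (RxOp φ)) (t, x) :=
    pxM_eq _ k (hd _)
  rw [e1, uncQ_RxOp φ hφd,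
    DD_sub (m0 (t, x)) (m1 (t, x)) (qx k),
    DD_mul_cq φ hφ 0 (qx 1) (qx k) (t, x), DD_mul_cq φ hφ 1 (qx 0) (qx k) (t, x)]

end Vals

/-- First-order commutation formula: `[T_φ, Z] = μ ∇_x(Zφ + c_Z φ)·∇_v`, with
`c_L = −2` and `c_Z = 0` for `Z ≠ L`, acting on `C²` functions of `(t,x,v)`. -/
theorem stmt12 (φ : ℝ → E2 → ℝ)
    (hφ : ContDiff ℝ 2 (fun p : ℝ × E2 => φ p.1 p.2))
    (μ : ℝ) (hμ : μ = 1 ∨ μ = -1)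
    (f : ℝ → E2 → E2 → ℝ)
    (hf : ContDiff ℝ 2 (fun p : ℝ × E2 × E2 => f p.1 p.2.1 p.2.2)) :
    ∀ (t : ℝ) (x v : E2),
      (∀ i : Fin 2,
        Tphi φ μ (Uop i f) t x v - Uop i (Tphi φ μ f) t x v
          = μ * ∑ k, pxM (UxOp i φ) k t x * pv f k t x v ∧
        Tphi φ μ (Sop i f) t x v - Sop i (Tphi φ μ f) t x v
          = μ * ∑ k, pxM (SxOp i φ) k t x * pv f k t x v) ∧
      Tphi φ μ (Lop f) t x v - Lop (Tphi φ μ f) t x v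
        = μ * ∑ k, pxM (fun t x => LxOp φ t x + (-2 : ℝ) * φ t x) k t x * pv f k t x v ∧
      Tphi φ μ (Rop f) t x v - Rop (Tphi φ μ f) t x v
        = μ * ∑ k, pxM (RxOp φ) k t x * pv f k t x v := by
  intro t x v
  have hφ2 : ContDiff ℝ 2 (uncQ φ) := hφ
  have hf2 : ContDiff ℝ 2 (unc f) := hf
  have hφdd : Differentiable ℝ (uncQ φ) := hφ2.differentiable (by norm_num)
  have hfd : Differentiable ℝ (unc f) := hf2.differentiable (by norm_num)
  have hT : Differentiable ℝ (unc (Tphi φ μ f)) := diff_unc_Tphi φ f μ hφ2 hf2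
  have s1 : DD (wx 0) (DD wt (unc f)) (t, x, v) = DD wt (DD (wx 0) (unc f)) (t, x, v) :=
    DD_symm hf2 _ _ _
  have s2 : DD (wx 1) (DD wt (unc f)) (t, x, v) = DD wt (DD (wx 1) (unc f)) (t, x, v) :=
    DD_symm hf2 _ _ _
  have s3 : DD (wv 0) (DD wt (unc f)) (t, x, v) = DD wt (DD (wv 0) (unc f)) (t, x, v) :=
    DD_symm hf2 _ _ _
  have s4 : DD (wv 1) (DD wt (unc f)) (t, x, v) = DD wt (DD (wv 1) (unc f)) (t, x, v) :=
    DD_symm hf2 _ _ _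
  have s5 : DD (wx 1) (DD (wx 0) (unc f)) (t, x, v) = DD (wx 0) (DD (wx 1) (unc f)) (t, x, v) :=
    DD_symm hf2 _ _ _
  have s6 : DD (wv 0) (DD (wx 0) (unc f)) (t, x, v) = DD (wx 0) (DD (wv 0) (unc f)) (t, x, v) :=
    DD_symm hf2 _ _ _
  have s7 : DD (wv 0) (DD (wx 1) (unc f)) (t, x, v) = DD (wx 1) (DD (wv 0) (unc f)) (t, x, v) :=
    DD_symm hf2 _ _ _
  have s8 : DD (wv 1) (DD (wx 0) (unc f)) (t, x, v) = DD (wx 0) (DD (wv 1) (unc f)) (t, x, v) :=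
    DD_symm hf2 _ _ _
  have s9 : DD (wv 1) (DD (wx 1) (unc f)) (t, x, v) = DD (wx 1) (DD (wv 1) (unc f)) (t, x, v) :=
    DD_symm hf2 _ _ _
  have s10 : DD (wv 1) (DD (wv 0) (unc f)) (t, x, v) = DD (wv 0) (DD (wv 1) (unc f)) (t, x, v) :=
    DD_symm hf2 _ _ _
  have sq : DD (qx 1) (DD (qx 0) (uncQ φ)) (t, x) = DD (qx 0) (DD (qx 1) (uncQ φ)) (t, x) :=
    DD_symm hφ2 _ _ _
  refine ⟨fun i => ?_, ?_, ?_⟩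
  · fin_cases i
    · refine ⟨?_, ?_⟩
      · simp only [Fin.zero_eta, Fin.mk_one]
        rw [Fin.sum_univ_two,
            Tphi_val φ μ (Uop 0 f) hφdd (diff_unc_Uop f hf2 0) t x v,
            Uop_val (Tphi φ μ f) hT 0 t x v,
            pxM_UxOp_val φ hφ2 0 0 t x, pxM_UxOp_val φ hφ2 0 1 t x,
            pv_val f hfd 0 t x v, pv_val f hfd 1 t x v]
        simp only [DD_unc_Uop f hf2 0, DD_unc_Tphi φ f μ hφ2 hf2]
        simp only [wt_1, wt_21, wt_22, wx_1, wx_22, wv_1, wv_21, wx_21_00, wx_21_01,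
            wx_21_10, wx_21_11, wv_22_00, wv_22_01, wv_22_10, wv_22_11, qx_1, qx_2_00,
            qx_2_01, qx_2_10, qx_2_11, piQ_mk, piQ_wx, piQ_wv, DD_zero]
        simp only [s1, s2, s3, s4, s5, s6, s7, s8, s9, s10, sq]
        ring
      · simp only [Fin.zero_eta, Fin.mk_one]
        rw [Fin.sum_univ_two,
            Tphi_val φ μ (Sop 0 f) hφdd (diff_unc_Sop f hf2 0) t x v,
            Sop_val (Tphi φ μ f) hT 0 t x v,
            pxM_SxOp_val φ hφ2 0 0 t x, pxM_SxOp_val φ hφ2 0 1 t x,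
            pv_val f hfd 0 t x v, pv_val f hfd 1 t x v]
        simp only [DD_unc_Sop f hf2 0, DD_unc_Tphi φ f μ hφ2 hf2]
        simp only [wt_1, wt_21, wt_22, wx_1, wx_22, wv_1, wv_21, wx_21_00, wx_21_01,
            wx_21_10, wx_21_11, wv_22_00, wv_22_01, wv_22_10, wv_22_11, qx_1, qx_2_00,
            qx_2_01, qx_2_10, qx_2_11, piQ_mk, piQ_wx, piQ_wv, DD_zero]
        simp only [s1, s2, s3, s4, s5, s6, s7, s8, s9, s10, sq]
        ring
    · refine ⟨?_, ?_⟩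
      · simp only [Fin.zero_eta, Fin.mk_one]
        rw [Fin.sum_univ_two,
            Tphi_val φ μ (Uop 1 f) hφdd (diff_unc_Uop f hf2 1) t x v,
            Uop_val (Tphi φ μ f) hT 1 t x v,
            pxM_UxOp_val φ hφ2 1 0 t x, pxM_UxOp_val φ hφ2 1 1 t x,
            pv_val f hfd 0 t x v, pv_val f hfd 1 t x v]
        simp only [DD_unc_Uop f hf2 1, DD_unc_Tphi φ f μ hφ2 hf2]
        simp only [wt_1, wt_21, wt_22, wx_1, wx_22, wv_1, wv_21, wx_21_00, wx_21_01,
            wx_21_10, wx_21_11, wv_22_00, wv_22_01, wv_22_10, wv_22_11, qx_1, qx_2_00,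
            qx_2_01, qx_2_10, qx_2_11, piQ_mk, piQ_wx, piQ_wv, DD_zero]
        simp only [s1, s2, s3, s4, s5, s6, s7, s8, s9, s10, sq]
        ring
      · simp only [Fin.zero_eta, Fin.mk_one]
        rw [Fin.sum_univ_two,
            Tphi_val φ μ (Sop 1 f) hφdd (diff_unc_Sop f hf2 1) t x v,
            Sop_val (Tphi φ μ f) hT 1 t x v,
            pxM_SxOp_val φ hφ2 1 0 t x, pxM_SxOp_val φ hφ2 1 1 t x,
            pv_val f hfd 0 t x v, pv_val f hfd 1 t x v]
        simp only [DD_unc_Sop f hf2 1, DD_unc_Tphi φ f μ hφ2 hf2]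
        simp only [wt_1, wt_21, wt_22, wx_1, wx_22, wv_1, wv_21, wx_21_00, wx_21_01,
            wx_21_10, wx_21_11, wv_22_00, wv_22_01, wv_22_10, wv_22_11, qx_1, qx_2_00,
            qx_2_01, qx_2_10, qx_2_11, piQ_mk, piQ_wx, piQ_wv, DD_zero]
        simp only [s1, s2, s3, s4, s5, s6, s7, s8, s9, s10, sq]
        ring
  · rw [Fin.sum_univ_two,
        Tphi_val φ μ (Lop f) hφdd (diff_unc_Lop f hf2) t x v,
        Lop_val (Tphi φ μ f) hT t x v,
        pxM_LxOp_val φ hφ2 0 t x, pxM_LxOp_val φ hφ2 1 t x,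
        pv_val f hfd 0 t x v, pv_val f hfd 1 t x v]
    simp only [DD_unc_Lop f hf2, DD_unc_Tphi φ f μ hφ2 hf2]
    simp only [wt_1, wt_21, wt_22, wx_1, wx_22, wv_1, wv_21, wx_21_00, wx_21_01,
        wx_21_10, wx_21_11, wv_22_00, wv_22_01, wv_22_10, wv_22_11, qx_1, qx_2_00,
        qx_2_01, qx_2_10, qx_2_11, piQ_mk, piQ_wx, piQ_wv, DD_zero]
    simp only [s1, s2, s3, s4, s5, s6, s7, s8, s9, s10, sq]
    ring
  · rw [Fin.sum_univ_two,
        Tphi_val φ μ (Rop f) hφdd (diff_unc_Rop f hf2) t x v,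
        Rop_val (Tphi φ μ f) hT t x v,
        pxM_RxOp_val φ hφ2 0 t x, pxM_RxOp_val φ hφ2 1 t x,
        pv_val f hfd 0 t x v, pv_val f hfd 1 t x v]
    simp only [DD_unc_Rop f hf2, DD_unc_Tphi φ f μ hφ2 hf2]
    simp only [wt_1, wt_21, wt_22, wx_1, wx_22, wv_1, wv_21, wx_21_00, wx_21_01,
        wx_21_10, wx_21_11, wv_22_00, wv_22_01, wv_22_10, wv_22_11, qx_1, qx_2_00,
        qx_2_01, qx_2_10, qx_2_11, piQ_mk, piQ_wx, piQ_wv, DD_zero]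
    simp only [s1, s2, s3, s4, s5, s6, s7, s8, s9, s10, sq]
    ring
end
end

section
/- Let g : ℝ² × ℝ² → ℝ be C¹ in its second variable with sup_{(s,u)} (⟨s⟩+⟨u⟩)⁶ |∇_u g(s,u)| =: K < ∞ and g integrable. Then for all t ≥ 0 and x ∈ ℝ², |∫_{ℝ²} g(y, e^{−t}(x − e^{−t}y)) dy − ∫_{ℝ²} g(y, e^{−t}x) dy| ≤ C·K/(e^t + |x|)², for a universal constant C. -/
open Real MeasureTheory

noncomputable section

def jb (w : E2) : ℝ := Real.sqrt (1 + ‖w‖ ^ 2)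

lemma jb_pos (w : E2) : 0 < jb w := Real.sqrt_pos.2 (by positivity)

lemma jb_sq (w : E2) : jb w ^ 2 = 1 + ‖w‖ ^ 2 := Real.sq_sqrt (by positivity)

lemma one_le_jb (w : E2) : 1 ≤ jb w := by
  rw [show (1:ℝ) = Real.sqrt 1 by simp]
  exact Real.sqrt_le_sqrt (le_add_of_nonneg_right (by positivity))

lemma norm_le_jb (w : E2) : ‖w‖ ≤ jb w := by
  rw [show ‖w‖ = Real.sqrt (‖w‖ ^ 2) by simp [Real.sqrt_sq (norm_nonneg w)]]
  exact Real.sqrt_le_sqrt (by norm_num)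

lemma one_add_norm_le (w : E2) : 1 + ‖w‖ ≤ Real.sqrt 2 * jb w := by
  rw [jb, ← Real.sqrt_mul (by norm_num : (0:ℝ) ≤ 2)]
  rw [show 1 + ‖w‖ = Real.sqrt ((1 + ‖w‖) ^ 2) by
    rw [Real.sqrt_sq (by positivity)]]
  apply Real.sqrt_le_sqrt
  nlinarith [norm_nonneg w, sq_nonneg (1 - ‖w‖)]

lemma jb_add_le (v w : E2) : jb (v + w) ≤ jb v + ‖w‖ := by
  rw [jb, show jb v + ‖w‖ = Real.sqrt ((jb v + ‖w‖) ^ 2) by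
    rw [Real.sqrt_sq (by nlinarith [jb_pos v, norm_nonneg w])]]
  apply Real.sqrt_le_sqrt
  have h1 : ‖v + w‖ ≤ ‖v‖ + ‖w‖ := norm_add_le v w
  have h2 : ‖v‖ ≤ jb v := norm_le_jb v
  have h3 := jb_sq v
  nlinarith [norm_nonneg (v + w), norm_nonneg v, norm_nonneg w]

set_option maxHeartbeats 1000000 in
/-- If `g : ℝ² × ℝ² → ℝ` is `C¹` in its second variable with
`sup (⟨s⟩+⟨u⟩)⁶ |∇_u g| ≤ K` and `g` integrable, then for all `t ≥ 0` and `x`,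
`|∫ g(y, e^{−t}(x − e^{−t}y)) dy − ∫ g(y, e^{−t}x) dy| ≤ C K/(e^t+|x|)²`
for a universal constant `C`. -/
theorem stmt18 :
    ∃ C : ℝ, 0 < C ∧
      ∀ (g : E2 → E2 → ℝ) (K : ℝ),
        (∀ s : E2, ContDiff ℝ 1 (g s)) →
        (∀ s u : E2, (jb s + jb u) ^ 6 * ‖fderiv ℝ (g s) u‖ ≤ K) →
        Integrable (fun p : E2 × E2 => g p.1 p.2) →
        ∀ (t : ℝ) (x : E2), 0 ≤ t →
        Integrable (fun y : E2 => g y (Real.exp (-t) • (x - Real.exp (-t) • y))) →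
        Integrable (fun y : E2 => g y (Real.exp (-t) • x)) →
        |(∫ y : E2, g y (Real.exp (-t) • (x - Real.exp (-t) • y)))
            - ∫ y : E2, g y (Real.exp (-t) • x)|
          ≤ C * K / (Real.exp t + ‖x‖) ^ 2 := by
  have hdim : ((Module.finrank ℝ E2 : ℝ)) < 3 := by
    simp [finrank_euclideanSpace_fin]; norm_num
  set M : ℝ := ∫ y : E2, (1 + ‖y‖) ^ (-(3:ℝ)) with hM
  have hMint : Integrable (fun y : E2 => (1 + ‖y‖) ^ (-(3:ℝ))) :=
    integrable_one_add_norm hdim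
  have hM0 : 0 ≤ M :=
    integral_nonneg fun y => Real.rpow_nonneg (by positivity) _
  refine ⟨8 * M + 1, by positivity, ?_⟩
  intro g K hC1 hK hInt t x ht h1 h2
  have hK0 : 0 ≤ K := le_trans (by positivity) (hK 0 0)
  set a : ℝ := Real.exp (-t) with ha_def
  have ha : 0 < a := Real.exp_pos _
  have ha1 : a ≤ 1 := Real.exp_le_one_iff.2 (by linarith)
  set D : ℝ := (Real.exp t + ‖x‖) ^ 2 with hD_def
  have hD : 0 < D := by positivity
  have haet : a * Real.exp t = 1 := by
    rw [ha_def, ← Real.exp_add]; simp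
  have haD : a ^ 2 * D ≤ 2 * jb (a • x) ^ 2 := by
    have h1' : a * (Real.exp t + ‖x‖) = 1 + ‖a • x‖ := by
      rw [norm_smul, Real.norm_eq_abs, abs_of_pos ha]; rw [mul_add, haet]
    have h2' : 1 + ‖a • x‖ ≤ Real.sqrt 2 * jb (a • x) := one_add_norm_le _
    have h3' : a ^ 2 * D = (a * (Real.exp t + ‖x‖)) ^ 2 := by rw [hD_def]; ring
    rw [h3', h1']
    nlinarith [Real.sq_sqrt (by norm_num : (0:ℝ) ≤ 2), jb_pos (a • x),
      Real.sqrt_nonneg 2, norm_nonneg (a • x)]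
  -- pointwise bound
  have hpt : ∀ y : E2,
      ‖g y (a • (x - a • y)) - g y (a • x)‖ ≤
        (8 * K / D) * (1 + ‖y‖) ^ (-(3:ℝ)) := by
    intro y
    set u₀ : E2 := a • (x - a • y) with hu₀
    set u₁ : E2 := a • x with hu₁
    set P : ℝ := jb y ^ 4 * jb (a • x) ^ 2 with hP_def
    have hP : 0 < P := by nlinarith [jb_pos y, jb_pos (a • x), pow_pos (jb_pos y) 4, pow_pos (jb_pos (a • x)) 2]
    have hbound : ∀ u ∈ segment ℝ u₀ u₁, ‖fderiv ℝ (g y) u‖ ≤ K / P := by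
      intro u hu
      obtain ⟨τ₁, τ₂, hτ₁, hτ₂, hsum, rfl⟩ := hu
      set u := τ₁ • u₀ + τ₂ • u₁ with hu_def
      have hax : a • x = u + (τ₁ * (a * a)) • y := by
        obtain rfl : τ₂ = 1 - τ₁ := by linarith
        rw [hu_def, hu₀, hu₁]; module
      have hτ1le : τ₁ ≤ 1 := by linarith
      have hjbax : jb (a • x) ≤ jb u + jb y := by
        calc jb (a • x) = jb (u + (τ₁ * (a * a)) • y) := by rw [hax]
        _ ≤ jb u + ‖(τ₁ * (a * a)) • y‖ := jb_add_le _ _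
        _ ≤ jb u + jb y := by
            rw [norm_smul, Real.norm_eq_abs, abs_of_nonneg (by positivity)]
            have : τ₁ * (a * a) * ‖y‖ ≤ 1 * ‖y‖ := by
              apply mul_le_mul_of_nonneg_right _ (norm_nonneg y)
              nlinarith
            have := norm_le_jb y
            linarith
      have hjby : jb y ≤ jb u + jb y := by
        have := jb_pos u; linarith
      have hPle : P ≤ (jb y + jb u) ^ 6 := by
        have hs : 0 < jb y + jb u := by nlinarith [jb_pos y, jb_pos u]
        have e1 : jb y ^ 4 ≤ (jb y + jb u) ^ 4 :=
          pow_le_pow_left₀ (le_of_lt (jb_pos y)) (by linarith) 4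
        have e2 : jb (a • x) ^ 2 ≤ (jb y + jb u) ^ 2 :=
          pow_le_pow_left₀ (le_of_lt (jb_pos (a • x))) (by linarith) 2
        calc P ≤ (jb y + jb u) ^ 4 * (jb y + jb u) ^ 2 := by
              apply mul_le_mul e1 e2 (by nlinarith [jb_pos (a • x), pow_pos (jb_pos (a • x)) 2]) (by positivity)
          _ = (jb y + jb u) ^ 6 := by ring
      rw [le_div_iff₀ hP]
      calc ‖fderiv ℝ (g y) u‖ * P ≤ ‖fderiv ℝ (g y) u‖ * (jb y + jb u) ^ 6 := by
            apply mul_le_mul_of_nonneg_left hPle (norm_nonneg _)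
        _ = (jb y + jb u) ^ 6 * ‖fderiv ℝ (g y) u‖ := by ring
        _ ≤ K := hK y u
    have hmvt : ‖g y u₀ - g y u₁‖ ≤ (K / P) * ‖u₀ - u₁‖ :=
      (convex_segment u₀ u₁).norm_image_sub_le_of_norm_fderiv_le
        (fun u _ => ((hC1 y).differentiable one_ne_zero).differentiableAt)
        hbound (right_mem_segment ℝ u₀ u₁) (left_mem_segment ℝ u₀ u₁)
    have hnorm : ‖u₀ - u₁‖ = a ^ 2 * ‖y‖ := by
      have : u₀ - u₁ = -((a * a) • y) := by rw [hu₀, hu₁]; module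
      rw [this, norm_neg, norm_smul, Real.norm_eq_abs, abs_of_pos (by positivity)]
      ring
    have hrpow : (1 + ‖y‖) ^ (-(3:ℝ)) = ((1 + ‖y‖) ^ (3:ℕ))⁻¹ := by
      rw [← Real.rpow_natCast (1 + ‖y‖) 3, ← Real.rpow_neg (by positivity)]
      norm_num
    rw [hrpow]
    have hyb : ‖y‖ * (1 + ‖y‖) ^ 3 ≤ 4 * jb y ^ 4 := by
      have h4 : (1 + ‖y‖) ^ 4 ≤ 4 * jb y ^ 4 := by
        calc (1 + ‖y‖) ^ 4 ≤ (Real.sqrt 2 * jb y) ^ 4 :=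
              pow_le_pow_left₀ (by positivity) (one_add_norm_le y) 4
          _ = (Real.sqrt 2 ^ 2) ^ 2 * jb y ^ 4 := by ring
          _ = 4 * jb y ^ 4 := by
              rw [Real.sq_sqrt (by norm_num : (0:ℝ) ≤ 2)]; norm_num
      calc ‖y‖ * (1 + ‖y‖) ^ 3 ≤ (1 + ‖y‖) * (1 + ‖y‖) ^ 3 :=
            mul_le_mul_of_nonneg_right (by linarith [norm_nonneg y]) (by positivity)
        _ = (1 + ‖y‖) ^ 4 := by ring
        _ ≤ 4 * jb y ^ 4 := h4
    calc ‖g y u₀ - g y u₁‖ ≤ (K / P) * (a ^ 2 * ‖y‖) := by rw [← hnorm]; exact hmvt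
      _ = (K * (a ^ 2 * ‖y‖)) / P := by ring
      _ ≤ (8 * K) / (D * (1 + ‖y‖) ^ 3) := by
          rw [div_le_div_iff₀ hP (by positivity)]
          calc K * (a ^ 2 * ‖y‖) * (D * (1 + ‖y‖) ^ 3)
              = K * ((a ^ 2 * D) * (‖y‖ * (1 + ‖y‖) ^ 3)) := by ring
            _ ≤ K * ((2 * jb (a • x) ^ 2) * (4 * jb y ^ 4)) := by
                apply mul_le_mul_of_nonneg_left _ hK0
                apply mul_le_mul haD hyb (by positivity) (by nlinarith [jb_pos (a • x), pow_pos (jb_pos (a • x)) 2])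
            _ = 8 * K * P := by rw [hP_def]; ring
      _ = (8 * K / D) * ((1 + ‖y‖) ^ (3:ℕ))⁻¹ := by
          rw [← div_div, div_eq_mul_inv (8 * K / D)]
  -- integral step
  have hdiff_int := h1.sub h2
  have hb_int : Integrable (fun y : E2 => (8 * K / D) * (1 + ‖y‖) ^ (-(3:ℝ))) :=
    hMint.const_mul _
  have hle : ‖∫ y : E2, (g y (a • (x - a • y)) - g y (a • x))‖ ≤
      ∫ y : E2, (8 * K / D) * (1 + ‖y‖) ^ (-(3:ℝ)) :=
    norm_integral_le_of_norm_le hb_int (Filter.Eventually.of_forall hpt)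
  rw [integral_sub h1 h2] at hle
  rw [integral_const_mul] at hle
  rw [Real.norm_eq_abs] at hle
  calc |(∫ y : E2, g y (a • (x - a • y))) - ∫ y : E2, g y (a • x)|
      ≤ 8 * K / D * M := hle
    _ ≤ (8 * M + 1) * K / D := by
        rw [div_mul_eq_mul_div, div_le_div_iff₀ hD hD]
        nlinarith [mul_nonneg hK0 hM0, mul_nonneg (mul_nonneg hK0 hM0) hD.le, mul_nonneg hK0 hD.le]
end
end
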